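/- arXiv:1011.3612 — 4 statements merged into one kernel-verified Lean document; each statement's English description precedes it below -/
import Mathlib

section
/- Suppose F_X is a distribution function on (0,∞) with reciprocal hazard function h_X such that ξ_X := lim_{x→x^F} h_X'(x) exists and is ≤ 0, where x^F = sup{x : F_X(x) < 1} satisfies 0 < x^F ≤ ∞. Then lim_{x→x^F} h_X(x)/x = 0, and consequently for every λ the limiting shape parameter of the Box–Cox transformed variable, ξ_Y = ξ_X + (λ−1)·lim_{x→x^F} h_X(x)/x, equals ξ_X. -/
open Real Filter

/-- If the reciprocal hazard function `h_X` has derivative tending to a limit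
`ξ_X ≤ 0` at the upper endpoint `x^F` (finite positive or infinite), then
`h_X(x)/x → 0` there, and consequently for every Box–Cox parameter `λ` the
transformed shape limit `h_X'(x) + (λ-1)·h_X(x)/x` tends to `ξ_X`. The filter
`l` is the approach to the endpoint: `atTop` when `x^F = ∞`, or `𝓝[<] c` for
a finite endpoint `c > 0`, in which case `h_X → 0` there (as `h_X` is the
reciprocal hazard of a distribution with endpoint `c`). -/
theorem boxcox_shape_invariant_nonpos
    (hX : ℝ → ℝ) (ξX : ℝ) (hξ : ξX ≤ 0) (l : Filter ℝ)
    (hcase :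
      (l = atTop ∧ (∀ᶠ x in l, 0 ≤ hX x ∧ DifferentiableAt ℝ hX x)) ∨
      (∃ c : ℝ, 0 < c ∧ l = nhdsWithin c (Set.Iio c) ∧ Tendsto hX l (nhds 0)))
    (hderiv : Tendsto (deriv hX) l (nhds ξX)) :
    Tendsto (fun x => hX x / x) l (nhds 0) ∧
      ∀ lam : ℝ,
        Tendsto (fun x => deriv hX x + (lam - 1) * hX x / x) l (nhds ξX) := by
  have hmain : Tendsto (fun x => hX x / x) l (nhds 0) := by
    rcases hcase with ⟨hl, hev⟩ | ⟨c, hc, hl, hX0⟩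
    · subst hl
      rw [NormedAddCommGroup.tendsto_nhds_zero]
      intro ε hε
      have hε2 : 0 < ε / 2 := by linarith
      have hd2 : ∀ᶠ x in atTop, deriv hX x < ε / 2 := by
        have : ξX < ε / 2 := by linarith
        exact hderiv.eventually (eventually_lt_nhds this)
      obtain ⟨a, ha⟩ := (eventually_atTop.1 (hev.and (hd2.and (eventually_gt_atTop 0))))
      have hapos : (0:ℝ) < a := (ha a le_rfl).2.2
      have hdiff : ∀ x ∈ Set.Ici a, DifferentiableAt ℝ hX x := fun x hx => (ha x hx).1.2
      set g : ℝ → ℝ := fun x => hX x - ε / 2 * x with hg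
      have hgderiv : ∀ x ∈ Set.Ici a, HasDerivAt g (deriv hX x - ε / 2) x := by
        intro x hx
        have h1 := (hdiff x hx).hasDerivAt
        have h2 : HasDerivAt (fun x : ℝ => ε / 2 * x) (ε / 2) x := by
          simpa using (hasDerivAt_id x).const_mul (ε / 2)
        exact h1.sub h2
      have hanti : AntitoneOn g (Set.Ici a) := by
        apply antitoneOn_of_deriv_nonpos (convex_Ici a)
        · exact fun x hx => (hgderiv x hx).continuousAt.continuousWithinAt
        · intro x hx
          rw [interior_Ici] at hx
          exact (hgderiv x (Set.mem_Ici.2 (le_of_lt hx))).differentiableAt.differentiableWithinAt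
        · intro x hx
          rw [interior_Ici] at hx
          rw [(hgderiv x (Set.mem_Ici.2 (le_of_lt hx))).deriv]
          have := (ha x (le_of_lt hx)).2.1
          linarith
      have hconst : Tendsto (fun x : ℝ => hX a / x) atTop (nhds 0) :=
        Tendsto.div_atTop tendsto_const_nhds tendsto_id
      have hsmall : ∀ᶠ x in atTop, hX a / x < ε / 2 :=
        hconst.eventually (eventually_lt_nhds (by linarith : (0:ℝ) < ε/2))
      filter_upwards [eventually_ge_atTop a, hsmall] with x hxa hxs
      have hxpos : (0:ℝ) < x := lt_of_lt_of_le hapos hxa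
      have hg_le : g x ≤ g a := hanti Set.self_mem_Ici hxa hxa
      have hXle : hX x ≤ hX a + ε / 2 * x := by
        have : ε / 2 * a ≥ 0 := by positivity
        simp only [hg] at hg_le
        linarith
      have h0 : 0 ≤ hX x := (ha x hxa).1.1
      have hub : hX x / x ≤ hX a / x + ε / 2 := by
        rw [div_add' _ _ _ (ne_of_gt hxpos)]
        gcongr
      have : hX x / x < ε := lt_of_le_of_lt hub (by linarith)
      have hnn : 0 ≤ hX x / x := div_nonneg h0 (le_of_lt hxpos)
      rw [Real.norm_eq_abs, abs_of_nonneg hnn]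
      exact this
    · subst hl
      have hid : Tendsto (fun x : ℝ => x) (nhdsWithin c (Set.Iio c)) (nhds c) :=
        tendsto_id.mono_left nhdsWithin_le_nhds
      simpa [Pi.div_def] using hX0.div hid (ne_of_gt hc)
  refine ⟨hmain, fun lam => ?_⟩
  have h2 : Tendsto (fun x => (lam - 1) * (hX x / x)) l (nhds ((lam - 1) * 0)) :=
    hmain.const_mul (lam - 1)
  have := hderiv.add h2
  simp only [mul_zero, add_zero] at this
  refine this.congr (fun x => ?_)
  ring
end

section
/- If h: [a, ∞) → ℝ is differentiable, h(x) ≥ 0 for all x ≥ a, and h'(x) → L as x → ∞ with L ≤ 0, then h(x)/x → 0 as x → ∞. (In fact L must equal 0 and h(x)/x → 0.) -/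
open Real Filter

-- Mean value helper: slope between two points ≥ a equals a derivative value.
lemma mvt_aux (h : ℝ → ℝ) (a : ℝ)
    (hdiff : ∀ x, a ≤ x → DifferentiableAt ℝ h x)
    {x y : ℝ} (hax : a ≤ x) (hxy : x < y) :
    ∃ c ∈ Set.Ioo x y, deriv h c = (h y - h x) / (y - x) := by
  apply exists_deriv_eq_slope h hxy
  · exact fun z hz => (hdiff z (le_trans hax hz.1)).continuousAt.continuousWithinAt
  · exact fun z hz => (hdiff z (le_trans hax hz.1.le)).differentiableWithinAt

/-- Key analytic lemma: if `h : [a,∞) → ℝ` is differentiable and nonnegative,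
and `h'(x) → L` as `x → ∞` with `L ≤ 0`, then in fact `L = 0` and
`h(x)/x → 0` as `x → ∞`. -/
theorem nonneg_deriv_limit_nonpos
    (h : ℝ → ℝ) (a L : ℝ)
    (hdiff : ∀ x, a ≤ x → DifferentiableAt ℝ h x)
    (hnn : ∀ x, a ≤ x → 0 ≤ h x)
    (hL : Tendsto (deriv h) atTop (nhds L))
    (hLle : L ≤ 0) :
    L = 0 ∧ Tendsto (fun x => h x / x) atTop (nhds 0) := by
  have hL0 : L = 0 := by
    by_contra hne
    have hLlt : L < 0 := lt_of_le_of_ne hLle hne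
    have hev : ∀ᶠ x in atTop, deriv h x < L / 2 :=
      hL.eventually_lt_const (by linarith)
    obtain ⟨x0, hx0⟩ := (hev.and (eventually_ge_atTop a)).exists_forall_of_atTop
    -- pick a big x
    set x : ℝ := x0 + (2 * (h x0 + 1)) / (-L) with hxdef
    have hden : 0 < -L := by linarith
    have hpos : 0 < (2 * (h x0 + 1)) / (-L) := by
      apply div_pos _ hden
      have := hnn x0 (hx0 x0 le_rfl).2
      linarith
    have hxy : x0 < x := by simp [hxdef]; linarith
    obtain ⟨c, hc, hceq⟩ := mvt_aux h a hdiff (hx0 x0 le_rfl).2 hxy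
    have hcd : deriv h c < L / 2 := (hx0 c (le_of_lt hc.1)).1
    have hxx : 0 < x - x0 := by linarith
    have hslope : (h x - h x0) / (x - x0) < L / 2 := hceq ▸ hcd
    have h1 : h x - h x0 < (L / 2) * (x - x0) := by
      have := (div_lt_iff₀ hxx).mp hslope
      linarith
    have hxsub : x - x0 = (2 * (h x0 + 1)) / (-L) := by simp [hxdef]
    have h2 : (L / 2) * (x - x0) = -(h x0 + 1) := by
      rw [hxsub]
      field_simp
    have h3 : h x < -1 := by
      rw [h2] at h1; linarith
    have := hnn x (le_trans (hx0 x0 le_rfl).2 hxy.le)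
    linarith
  refine ⟨hL0, ?_⟩
  rw [Metric.tendsto_nhds]
  intro ε hε
  have hev : ∀ᶠ x in atTop, |deriv h x| < ε / 2 := by
    have := Metric.tendsto_nhds.mp hL (ε / 2) (by linarith)
    simpa [hL0, Real.dist_eq] using this
  obtain ⟨x0, hx0⟩ := ((hev.and (eventually_ge_atTop a)).and
    (eventually_ge_atTop 0)).exists_forall_of_atTop
  have hax0 : a ≤ x0 := (hx0 x0 le_rfl).1.2
  have h0x0 : (0:ℝ) ≤ x0 := (hx0 x0 le_rfl).2
  filter_upwards [eventually_gt_atTop (max x0 (max 1 (2 * h x0 / ε)))] with x hx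
  have hxx0 : x0 < x := lt_of_le_of_lt (le_max_left _ _) hx
  have hx1 : (1:ℝ) < x := lt_of_le_of_lt (le_trans (le_max_left _ _) (le_max_right _ _)) hx
  have hxpos : 0 < x := by linarith
  have hxbig : 2 * h x0 / ε < x :=
    lt_of_le_of_lt (le_trans (le_max_right _ _) (le_max_right _ _)) hx
  obtain ⟨c, hc, hceq⟩ := mvt_aux h a hdiff hax0 hxx0
  have hcd : |deriv h c| < ε / 2 := (hx0 c (le_of_lt hc.1)).1.1
  have hxs : 0 < x - x0 := by linarith
  have hslope : |(h x - h x0) / (x - x0)| < ε / 2 := hceq ▸ hcd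
  have hub : (h x - h x0) / (x - x0) < ε / 2 := lt_of_le_of_lt (le_abs_self _) hslope
  have h1 : h x < h x0 + (ε / 2) * (x - x0) := by
    have := (div_lt_iff₀ hxs).mp hub
    linarith
  have hhx : 0 ≤ h x := hnn x (le_trans hax0 hxx0.le)
  rw [Real.dist_eq, sub_zero, abs_of_nonneg (div_nonneg hhx hxpos.le)]
  rw [div_lt_iff₀ hxpos]
  have hx0nn : 0 ≤ h x0 := hnn x0 hax0
  have h2 : 2 * h x0 < ε * x := by
    have := (div_lt_iff₀ hε).mp hxbig
    -- hxbig : 2 * h x0 / ε < x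
    calc 2 * h x0 = (2 * h x0 / ε) * ε := by field_simp
    _ < x * ε := by apply mul_lt_mul_of_pos_right hxbig hε
    _ = ε * x := mul_comm _ _
  nlinarith [hxs, hε.le, h0x0]
end

section
/- Let F_X be the log-Pareto distribution with 1 − F_X(x) = [1 + (γ/β)(log x − u)]^{−1/γ} for γ > 0, β > 0, u ∈ ℝ (support x ≥ e^u). Then lim_{x→∞} h_X'(x) does not exist as a finite limit (h_X'(x) → ∞), so F_X lies outside every extreme value domain of attraction; but the log-transform Y = log X satisfies lim_{y→∞} h_Y'(y) = γ, so Y is in the Fréchet domain of attraction with shape parameter γ. -/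
open Real Filter


private lemma aux_div (γ β b : ℝ) (hγ : 0 < γ) (hβ : 0 < β) (hb : 0 < b) :
    b ^ (-1/γ) / -((γ/β) * (-1/γ) * b ^ (-1/γ - 1)) = β * b := by
  have hc : b ^ (-1/γ - 1) ≠ 0 := (Real.rpow_pos_of_pos hb _).ne'
  have hexp : b ^ (-1/γ) = b ^ (-1/γ - 1) * b := by
    rw [← Real.rpow_add_one hb.ne']; ring_nf
  rw [hexp]
  field_simp

private lemma aux_div' (γ β b x : ℝ) (hγ : 0 < γ) (hβ : 0 < β) (hb : 0 < b) (hx : 0 < x) :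
    b ^ (-1/γ) / -((γ/β) * x⁻¹ * (-1/γ) * b ^ (-1/γ - 1)) = β * x * b := by
  have hc : b ^ (-1/γ - 1) ≠ 0 := (Real.rpow_pos_of_pos hb _).ne'
  have hexp : b ^ (-1/γ) = b ^ (-1/γ - 1) * b := by
    rw [← Real.rpow_add_one hb.ne']; ring_nf
  rw [hexp]
  field_simp

/-- Log-Pareto distribution `1 - F_X(x) = [1 + (γ/β)(log x - u)]^(-1/γ)`,
`γ, β > 0`: the reciprocal hazard derivative `h_X'` tends to `∞` (so no finite
limit exists and `F_X` lies outside every extreme value domain of attraction),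
while the log-transform `Y = log X`, with generalized Pareto distribution
function `F_Y(y) = 1 - [1 + (γ/β)(y - u)]^(-1/γ)`, satisfies
`h_Y'(y) → γ`, so `Y` is in the Fréchet domain of attraction with shape `γ`. -/
theorem logPareto_general_boxcox
    (γ β u : ℝ) (hγ : 0 < γ) (hβ : 0 < β)
    (FX hX FY hY : ℝ → ℝ)
    (hFX : FX = fun x => 1 - (1 + (γ / β) * (Real.log x - u)) ^ (-1 / γ))
    (hhX : hX = fun x => (1 - FX x) / deriv FX x)
    (hFY : FY = fun y => 1 - (1 + (γ / β) * (y - u)) ^ (-1 / γ))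
    (hhY : hY = fun y => (1 - FY y) / deriv FY y) :
    (¬ ∃ L : ℝ, Tendsto (deriv hX) atTop (nhds L)) ∧
    Tendsto (deriv hX) atTop atTop ∧
    Tendsto (deriv hY) atTop (nhds γ) := by
  have hγβ : (0:ℝ) < γ / β := div_pos hγ hβ
  -- values of hY on (u, ∞)
  have hYval : ∀ y, u < y → hY y = β * (1 + (γ / β) * (y - u)) := by
    intro y hy
    have hb : (0:ℝ) < 1 + (γ / β) * (y - u) := by nlinarith
    have hbase : HasDerivAt (fun z => 1 + (γ / β) * (z - u)) (γ / β) y := by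
      simpa using (((hasDerivAt_id y).sub_const u).const_mul (γ/β)).const_add 1
    have hpow : HasDerivAt (fun z => (1 + (γ / β) * (z - u)) ^ (-1/γ))
        ((γ/β) * (-1/γ) * (1 + (γ / β) * (y - u)) ^ (-1/γ - 1)) y :=
      hbase.rpow_const (Or.inl hb.ne')
    have hF : HasDerivAt FY
        (-((γ/β) * (-1/γ) * (1 + (γ / β) * (y - u)) ^ (-1/γ - 1))) y := by
      rw [hFY]; simpa using hpow.const_sub 1
    rw [hhY]
    beta_reduce
    rw [hF.deriv, hFY]
    simp only [sub_sub_cancel]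
    exact aux_div γ β _ hγ hβ hb
  -- derivative of hY eventually equals γ
  have hderivY : ∀ᶠ y in atTop, deriv hY y = γ := by
    filter_upwards [eventually_gt_atTop u] with y hy
    have hmem : Set.Ioi u ∈ nhds y := Ioi_mem_nhds hy
    have heq : hY =ᶠ[nhds y] fun z => β * (1 + (γ / β) * (z - u)) := by
      filter_upwards [hmem] with z hz
      exact hYval z hz
    rw [heq.deriv_eq]
    have h : HasDerivAt (fun z => β * (1 + (γ / β) * (z - u))) (β * (γ/β)) y := by
      simpa using ((((hasDerivAt_id y).sub_const u).const_mul (γ/β)).const_add 1).const_mul β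
    rw [h.deriv]
    field_simp
  have hTY : Tendsto (deriv hY) atTop (nhds γ) :=
    tendsto_const_nhds.congr' (by filter_upwards [hderivY] with y hy using hy.symm)
  -- values of hX on (exp u, ∞)
  have hXval : ∀ x, Real.exp u < x → hX x = β * x * (1 + (γ / β) * (Real.log x - u)) := by
    intro x hx
    have hx0 : (0:ℝ) < x := (Real.exp_pos u).trans hx
    have hlog : u < Real.log x := (Real.lt_log_iff_exp_lt hx0).mpr hx
    have hb : (0:ℝ) < 1 + (γ / β) * (Real.log x - u) := by nlinarith
    have hbase : HasDerivAt (fun z => 1 + (γ / β) * (Real.log z - u)) ((γ/β) * x⁻¹) x := by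
      simpa using (((Real.hasDerivAt_log hx0.ne').sub_const u).const_mul (γ/β)).const_add 1
    have hpow : HasDerivAt (fun z => (1 + (γ / β) * (Real.log z - u)) ^ (-1/γ))
        ((γ/β) * x⁻¹ * (-1/γ) * (1 + (γ / β) * (Real.log x - u)) ^ (-1/γ - 1)) x :=
      hbase.rpow_const (Or.inl hb.ne')
    have hF : HasDerivAt FX
        (-((γ/β) * x⁻¹ * (-1/γ) * (1 + (γ / β) * (Real.log x - u)) ^ (-1/γ - 1))) x := by
      rw [hFX]; simpa using hpow.const_sub 1
    rw [hhX]
    beta_reduce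
    rw [hF.deriv, hFX]
    simp only [sub_sub_cancel]
    exact aux_div' γ β _ x hγ hβ hb hx0
  -- derivative of hX eventually equals β*(1+(γ/β)(log x - u)) + γ
  have hderivX : ∀ᶠ x in atTop,
      deriv hX x = β * (1 + (γ / β) * (Real.log x - u)) + γ := by
    filter_upwards [eventually_gt_atTop (Real.exp u)] with x hx
    have hx0 : (0:ℝ) < x := (Real.exp_pos u).trans hx
    have hmem : Set.Ioi (Real.exp u) ∈ nhds x := Ioi_mem_nhds hx
    have heq : hX =ᶠ[nhds x] fun z => β * z * (1 + (γ / β) * (Real.log z - u)) := by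
      filter_upwards [hmem] with z hz
      exact hXval z hz
    rw [heq.deriv_eq]
    have hbase : HasDerivAt (fun z => 1 + (γ / β) * (Real.log z - u)) ((γ/β) * x⁻¹) x := by
      simpa using (((Real.hasDerivAt_log hx0.ne').sub_const u).const_mul (γ/β)).const_add 1
    have hlin : HasDerivAt (fun z : ℝ => β * z) β x := by
      simpa using (hasDerivAt_id x).const_mul β
    have h : HasDerivAt (fun z => β * z * (1 + (γ / β) * (Real.log z - u)))
        (β * (1 + (γ / β) * (Real.log x - u)) + β * x * ((γ/β) * x⁻¹)) x := hlin.mul hbase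
    rw [h.deriv]
    have : β * x * ((γ/β) * x⁻¹) = γ := by field_simp
    rw [this]
  have hTXaux : Tendsto (fun x => β * (1 + (γ / β) * (Real.log x - u)) + γ) atTop atTop := by
    have h1 : Tendsto (fun x => Real.log x - u) atTop atTop :=
      tendsto_atTop_add_const_right _ (-u) Real.tendsto_log_atTop |>.congr (fun x => by ring)
    have h2 : Tendsto (fun x => (γ/β) * (Real.log x - u)) atTop atTop := h1.const_mul_atTop hγβ
    have h3 : Tendsto (fun x => 1 + (γ/β) * (Real.log x - u)) atTop atTop :=
      tendsto_atTop_add_const_left _ 1 h2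
    have h4 : Tendsto (fun x => β * (1 + (γ/β) * (Real.log x - u))) atTop atTop :=
      h3.const_mul_atTop hβ
    exact tendsto_atTop_add_const_right _ γ h4
  have hTX : Tendsto (deriv hX) atTop atTop :=
    hTXaux.congr' (by filter_upwards [hderivX] with x hx using hx.symm)
  refine ⟨?_, hTX, hTY⟩
  rintro ⟨L, hL⟩
  exact not_tendsto_nhds_of_tendsto_atTop hTX L hL
end

section
/- Suppose F_X satisfies 1 − F_X(x) = Cx^{−α}(1 + Dx^{−β}) exactly for large x, with C, α, β > 0, D ≠ 0, and the expression differentiable term-wise. Then ξ_X = 1/α, and the penultimate error h_X'(x) − ξ_X is asymptotically equivalent (as x → ∞) to (Dβ(β−1)/α²)·x^{−β} when β ≠ 1; moreover for the Box–Cox transformed variable with parameter λ, h_Y'(y(x)) − ξ_Y is asymptotically equivalent to (Dβ(β−λ)/α²)·x^{−β}, so taking λ = β annihilates the leading-order penultimate error term. -/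
open Real Filter

set_option maxHeartbeats 1000000

/-- Second-order Pareto tail (Example 1 / Table 1): if
`1 - F_X(x) = C x^(-α)(1 + D x^(-β))` exactly for large `x`, then
`ξ_X = lim h_X' = 1/α`; the penultimate error `h_X'(x) - 1/α` is
asymptotically `(Dβ(β-1)/α²) x^(-β)` when `β ≠ 1`; and for the Box–Cox
transform with parameter `λ`, `h_Y'(y(x)) - λ/α = h_X'(x) + (λ-1)h_X(x)/x - λ/α`
is asymptotically `(Dβ(β-λ)/α²) x^(-β)` when `λ ≠ β` — so `λ = β` annihilates
the leading-order penultimate error term. -/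
theorem secondOrder_pareto_boxcox_rate
    (C α β D : ℝ) (hC : 0 < C) (hα : 0 < α) (hβ : 0 < β) (hD : D ≠ 0)
    (x₀ : ℝ)
    (FX hX : ℝ → ℝ)
    (hFX : ∀ x : ℝ, x₀ ≤ x → 1 - FX x = C * x ^ (-α) * (1 + D * x ^ (-β)))
    (hhX : hX = fun x => (1 - FX x) / deriv FX x) :
    Tendsto (deriv hX) atTop (nhds (1 / α)) ∧
    (β ≠ 1 →
      Tendsto (fun x => (deriv hX x - 1 / α) / ((D * β * (β - 1) / α ^ 2) * x ^ (-β)))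
        atTop (nhds 1)) ∧
    (∀ lam : ℝ, lam ≠ β →
      Tendsto (fun x =>
          (deriv hX x + (lam - 1) * hX x / x - lam / α)
            / ((D * β * (β - lam) / α ^ 2) * x ^ (-β)))
        atTop (nhds 1)) := by
  have hα0 : α ≠ 0 := ne_of_gt hα
  have hu0 : Tendsto (fun x : ℝ => x ^ (-β)) atTop (nhds (0:ℝ)) :=
    tendsto_rpow_neg_atTop hβ
  have hDenT : Tendsto (fun x : ℝ => α + D * (α + β) * x ^ (-β)) atTop (nhds α) := by
    have h := (hu0.const_mul (D * (α + β))).const_add α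
    simpa using h
  have hev : ∀ᶠ x : ℝ in atTop, α / 2 < α + D * (α + β) * x ^ (-β) :=
    hDenT.eventually (eventually_gt_nhds (by linarith))
  obtain ⟨M₁, hM₁⟩ := eventually_atTop.mp hev
  set M : ℝ := max M₁ (max x₀ 1) with hMdef
  have hfacts : ∀ x : ℝ, M < x →
      0 < x ∧ x₀ < x ∧ 0 < α + D * (α + β) * x ^ (-β) := by
    intro x hx
    have h1 : (1:ℝ) ≤ M := le_trans (le_max_right x₀ 1) (le_max_right _ _)
    have hx0 : 0 < x := lt_of_lt_of_le one_pos (le_of_lt (lt_of_le_of_lt h1 hx))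
    refine ⟨hx0, lt_of_le_of_lt (le_trans (le_max_left x₀ 1) (le_max_right _ _)) hx, ?_⟩
    have := hM₁ x (le_of_lt (lt_of_le_of_lt (le_max_left _ _) hx))
    linarith
  -- pointwise formula for hX
  have hXeq : ∀ x : ℝ, M < x →
      hX x = x * (1 + D * x ^ (-β)) / (α + D * (α + β) * x ^ (-β)) := by
    intro x hx
    obtain ⟨hx0, hxx0, hden⟩ := hfacts x hx
    have ha : (0:ℝ) < x ^ (-α) := Real.rpow_pos_of_pos hx0 _
    have h1 : HasDerivAt (fun z : ℝ => z ^ (-α)) (-α * x ^ (-α - 1)) x :=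
      Real.hasDerivAt_rpow_const (Or.inl (ne_of_gt hx0))
    have h2 : HasDerivAt (fun z : ℝ => z ^ (-β)) (-β * x ^ (-β - 1)) x :=
      Real.hasDerivAt_rpow_const (Or.inl (ne_of_gt hx0))
    have hG : HasDerivAt
        (fun z : ℝ => 1 - (C * z ^ (-α) + C * D * (z ^ (-α) * z ^ (-β))))
        (-(C * (-α * x ^ (-α - 1)) +
          C * D * ((-α * x ^ (-α - 1)) * x ^ (-β) + x ^ (-α) * (-β * x ^ (-β - 1))))) x :=
      ((h1.const_mul C).add ((h1.mul h2).const_mul (C * D))).const_sub 1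
    have hEq : FX =ᶠ[nhds x]
        fun z => 1 - (C * z ^ (-α) + C * D * (z ^ (-α) * z ^ (-β))) := by
      filter_upwards [Ioi_mem_nhds hxx0] with z hz
      linear_combination -hFX z (le_of_lt hz)
    have hd : deriv FX x = C * x ^ (-α) / x * (α + D * (α + β) * x ^ (-β)) := by
      rw [hEq.deriv_eq, hG.deriv]
      rw [Real.rpow_sub hx0 (-α) 1, Real.rpow_sub hx0 (-β) 1, Real.rpow_one]
      field_simp
      ring
    have hXx : hX x = (1 - FX x) / deriv FX x := by simp [hhX]
    rw [hXx, hFX x (le_of_lt hxx0), hd]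
    have hne1 : C * x ^ (-α) / x * (α + D * (α + β) * x ^ (-β)) ≠ 0 :=
      mul_ne_zero (div_ne_zero (mul_ne_zero (ne_of_gt hC) (ne_of_gt ha)) (ne_of_gt hx0))
        (ne_of_gt hden)
    rw [div_eq_div_iff hne1 (ne_of_gt hden)]
    field_simp
    try ring
  -- formula for deriv hX
  have hderiv : ∀ x : ℝ, M < x →
      deriv hX x =
        (α + D * (2*α + β + β^2) * x ^ (-β) + D^2 * (α + β) * (x ^ (-β))^2)
          / (α + D * (α + β) * x ^ (-β))^2 := by
    intro x hx
    obtain ⟨hx0, hxx0, hden⟩ := hfacts x hx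
    have hEq : hX =ᶠ[nhds x]
        fun z => z * (1 + D * z ^ (-β)) / (α + D * (α + β) * z ^ (-β)) := by
      filter_upwards [Ioi_mem_nhds hx] with z hz
      exact hXeq z hz
    rw [hEq.deriv_eq]
    have h2 : HasDerivAt (fun z : ℝ => z ^ (-β)) (-β * x ^ (-β - 1)) x :=
      Real.hasDerivAt_rpow_const (Or.inl (ne_of_gt hx0))
    have hN : HasDerivAt (fun z : ℝ => z * (1 + D * z ^ (-β)))
        (1 * (1 + D * x ^ (-β)) + x * (D * (-β * x ^ (-β - 1)))) x :=
      (hasDerivAt_id x).mul ((h2.const_mul D).const_add 1)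
    have hD' : HasDerivAt (fun z : ℝ => α + D * (α + β) * z ^ (-β))
        (D * (α + β) * (-β * x ^ (-β - 1))) x :=
      (h2.const_mul (D * (α + β))).const_add α
    have hh : HasDerivAt
        (fun z : ℝ => z * (1 + D * z ^ (-β)) / (α + D * (α + β) * z ^ (-β)))
        (((1 * (1 + D * x ^ (-β)) + x * (D * (-β * x ^ (-β - 1)))) *
            (α + D * (α + β) * x ^ (-β)) -
          (x * (1 + D * x ^ (-β))) * (D * (α + β) * (-β * x ^ (-β - 1)))) /
            (α + D * (α + β) * x ^ (-β)) ^ 2) x :=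
      hN.div hD' (ne_of_gt hden)
    rw [hh.deriv]
    rw [Real.rpow_sub hx0 (-β) 1, Real.rpow_one]
    field_simp
    ring
  -- Part 1
  have hP : Tendsto (fun x : ℝ =>
      (α + D * (2*α + β + β^2) * x ^ (-β) + D^2 * (α + β) * (x ^ (-β))^2)
        / (α + D * (α + β) * x ^ (-β))^2) atTop (nhds (1/α)) := by
    have h1 : Tendsto (fun u : ℝ => α + D * (2*α + β + β^2) * u + D^2 * (α + β) * u^2)
        (nhds 0) (nhds α) := by
      have hc : Continuous fun u : ℝ => α + D * (2*α + β + β^2) * u + D^2 * (α + β) * u^2 := by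
        continuity
      simpa using hc.tendsto 0
    have h2 : Tendsto (fun u : ℝ => (α + D * (α + β) * u)^2) (nhds 0) (nhds (α^2)) := by
      have hc : Continuous fun u : ℝ => (α + D * (α + β) * u)^2 := by continuity
      simpa using hc.tendsto 0
    have h3 := h1.div h2 (by positivity)
    have hval : α / α^2 = 1/α := by
      field_simp [pow_two]
    rw [hval] at h3
    exact h3.comp hu0
  have part1 : Tendsto (deriv hX) atTop (nhds (1 / α)) := by
    refine Tendsto.congr' ?_ hP
    filter_upwards [eventually_gt_atTop M] with x hx
    exact (hderiv x hx).symm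
  refine ⟨part1, ?_, ?_⟩
  · -- Part 2
    intro hβ1
    have hb1 : β - 1 ≠ 0 := sub_ne_zero.mpr hβ1
    have hR : Tendsto (fun u : ℝ =>
        (D*α*β*(β-1) - D^2*β*(α+β)*u) /
          (α * (α + D*(α+β)*u)^2 * (D*β*(β-1)/α^2))) (nhds 0) (nhds 1) := by
      have h1 : Continuous fun u : ℝ => D*α*β*(β-1) - D^2*β*(α+β)*u := by continuity
      have h2 : Continuous fun u : ℝ => α * (α + D*(α+β)*u)^2 * (D*β*(β-1)/α^2) := by
        continuity
      have hne : α * (α + D*(α+β)*(0:ℝ))^2 * (D*β*(β-1)/α^2) ≠ 0 := by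
        have : (α + D*(α+β)*(0:ℝ)) = α := by ring
        rw [this]
        exact mul_ne_zero (mul_ne_zero hα0 (pow_ne_zero 2 hα0))
          (div_ne_zero (mul_ne_zero (mul_ne_zero hD (ne_of_gt hβ)) hb1) (pow_ne_zero 2 hα0))
      have h3 := (h1.tendsto 0).div (h2.tendsto 0) hne
      have hval : (D*α*β*(β-1) - D^2*β*(α+β)*(0:ℝ)) /
          (α * (α + D*(α+β)*(0:ℝ))^2 * (D*β*(β-1)/α^2)) = 1 := by
        field_simp
        ring_nf
        field_simp
        ring
      rw [hval] at h3
      exact h3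
    refine Tendsto.congr' ?_ (hR.comp hu0)
    filter_upwards [eventually_gt_atTop M] with x hx
    obtain ⟨hx0, hxx0, hden⟩ := hfacts x hx
    have hu : (0:ℝ) < x ^ (-β) := Real.rpow_pos_of_pos hx0 _
    simp only [Function.comp]
    rw [hderiv x hx]
    rw [div_eq_div_iff (by positivity) ?h2]
    case h2 =>
      apply mul_ne_zero
      exact div_ne_zero (mul_ne_zero (mul_ne_zero hD (ne_of_gt hβ)) hb1) (pow_ne_zero 2 hα0)
      exact ne_of_gt hu
    field_simp
    ring
  · -- Part 3
    intro lam hlam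
    have hbl : β - lam ≠ 0 := sub_ne_zero.mpr (Ne.symm hlam)
    have hR : Tendsto (fun u : ℝ =>
        (D*α*β*(β-1) - D^2*β*(α+β)*u - (lam-1)*D*β*(α + D*(α+β)*u)) /
          (α * (α + D*(α+β)*u)^2 * (D*β*(β-lam)/α^2))) (nhds 0) (nhds 1) := by
      have h1 : Continuous fun u : ℝ =>
          D*α*β*(β-1) - D^2*β*(α+β)*u - (lam-1)*D*β*(α + D*(α+β)*u) := by continuity
      have h2 : Continuous fun u : ℝ => α * (α + D*(α+β)*u)^2 * (D*β*(β-lam)/α^2) := by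
        continuity
      have hne : α * (α + D*(α+β)*(0:ℝ))^2 * (D*β*(β-lam)/α^2) ≠ 0 := by
        have : (α + D*(α+β)*(0:ℝ)) = α := by ring
        rw [this]
        exact mul_ne_zero (mul_ne_zero hα0 (pow_ne_zero 2 hα0))
          (div_ne_zero (mul_ne_zero (mul_ne_zero hD (ne_of_gt hβ)) hbl) (pow_ne_zero 2 hα0))
      have h3 := (h1.tendsto 0).div (h2.tendsto 0) hne
      have hval : (D*α*β*(β-1) - D^2*β*(α+β)*(0:ℝ) - (lam-1)*D*β*(α + D*(α+β)*(0:ℝ))) /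
          (α * (α + D*(α+β)*(0:ℝ))^2 * (D*β*(β-lam)/α^2)) = 1 := by
        field_simp
        ring_nf
        field_simp
        try ring
      rw [hval] at h3
      exact h3
    refine Tendsto.congr' ?_ (hR.comp hu0)
    filter_upwards [eventually_gt_atTop M] with x hx
    obtain ⟨hx0, hxx0, hden⟩ := hfacts x hx
    have hu : (0:ℝ) < x ^ (-β) := Real.rpow_pos_of_pos hx0 _
    simp only [Function.comp]
    rw [hderiv x hx, hXeq x hx]
    rw [div_eq_div_iff (by positivity) ?h2]
    case h2 =>
      apply mul_ne_zero
      exact div_ne_zero (mul_ne_zero (mul_ne_zero hD (ne_of_gt hβ)) hbl) (pow_ne_zero 2 hα0)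
      exact ne_of_gt hu
    field_simp
    ring
end
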